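/- Let n ≥ 1, k_1,...,k_n nonnegative reals extended periodically with period n, ψ(j) = Σ_{ℓ=1}^j k_ℓ, and m > ψ(n). If, for a real u ∈ [0,n) with j = ⌊u⌋ and u > j, the condition v − u ≥ ψ(⌊v⌋) − ψ(⌊u⌋) holds for all real v ≥ u (after rescaling so that m = n), then ψ(j+r) − ψ(j) < r for all r = 1,...,n. -/

import Mathlib

/-- Key step in the proof of the cyclic Ballot Theorem: a "good" real point `u`
strictly inside `[j, j+1)` forces index `j` to satisfy the strict discrete
ballot condition (after rescaling so that `m = n`). -/
theorem ballot_key_step (n : ℕ) (hn : 1 ≤ n) (k : ℕ → ℝ)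
    (hk : ∀ r, 0 ≤ k r) (hper : ∀ r, k (r + n) = k r)
    (ψ : ℕ → ℝ) (hψ : ∀ j, ψ j = ∑ ℓ ∈ Finset.Icc 1 j, k ℓ)
    (hm : ψ n < n)
    (u : ℝ) (hu0 : 0 ≤ u) (hun : u < n)
    (j : ℕ) (hj : j = ⌊u⌋₊) (hju : (j : ℝ) < u)
    (hgood : ∀ v : ℝ, u ≤ v → ψ ⌊v⌋₊ - ψ ⌊u⌋₊ ≤ v - u) :
    ∀ r ∈ Finset.Icc 1 n, ψ (j + r) - ψ j < r := by
  intro r hr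
  obtain ⟨hr1, _⟩ := Finset.mem_Icc.mp hr
  have hu_lt : u < (j : ℝ) + 1 := by
    rw [hj]; exact Nat.lt_floor_add_one u
  have huv : u ≤ ((j + r : ℕ) : ℝ) := by
    push_cast
    have : (1 : ℝ) ≤ r := by exact_mod_cast hr1
    linarith
  have h := hgood ((j + r : ℕ) : ℝ) huv
  rw [Nat.floor_natCast, ← hj] at h
  push_cast at h ⊢
  linarith
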